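/- arXiv:1810.08084 — 2 statements merged into one kernel-verified Lean document; each statement's English description precedes it below -/
import Mathlib

section
/- Let $u$ be three times continuously differentiable on a neighborhood of $T$ and define $K_x(x)=\frac{e_x^2(x-x_0)}{6}-\frac{e_x(x-x_0)^2}{2}+\frac{(x-x_0)^3}{3}$. Then $\int_{F_1}u\,dS+\int_{F_2}u\,dS=\frac{2}{e_x}\int_T u\,dV+\frac{e_x}{6}\int_T \partial_x^2 u\,dV+\frac{1}{e_x}\int_T \partial_x^3 u\,K_x(x)\,dV$. -/
open MeasureTheory intervalIntegral Set

/-- Tietze-type extension helper. -/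
lemma ext3 {s : Set (ℝ × ℝ × ℝ)} (hs : IsClosed s) (h : ℝ × ℝ × ℝ → ℝ)
    (hc : ContinuousOn h s) : ∃ g : ℝ × ℝ × ℝ → ℝ, Continuous g ∧ ∀ p ∈ s, g p = h p := by
  obtain ⟨g, hg⟩ := ContinuousMap.exists_restrict_eq hs ⟨s.restrict h, hc.restrict⟩
  refine ⟨g, g.continuous, fun p hp => ?_⟩
  have := congrFun (congrArg ContinuousMap.toFun hg) ⟨p, hp⟩
  exact this

/-- Fubini swap for continuous functions on rectangles. -/
lemma swapCont (a b c d : ℝ) (hab : a ≤ b) (hcd : c ≤ d) (f : ℝ → ℝ → ℝ)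
    (hf : Continuous (Function.uncurry f)) :
    ∫ x in a..b, ∫ y in c..d, f x y = ∫ y in c..d, ∫ x in a..b, f x y := by
  rw [intervalIntegral.integral_of_le hab, intervalIntegral.integral_of_le hcd]
  simp_rw [intervalIntegral.integral_of_le hcd, intervalIntegral.integral_of_le hab]
  have hi : IntegrableOn (Function.uncurry f) (Set.Ioc a b ×ˢ Set.Ioc c d) :=
    ((hf.continuousOn).integrableOn_compact (isCompact_Icc.prod isCompact_Icc)).mono_set
      (Set.prod_mono Set.Ioc_subset_Icc_self Set.Ioc_subset_Icc_self)
  have hi' : Integrable (Function.uncurry f)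
      ((volume.restrict (Set.Ioc a b)).prod (volume.restrict (Set.Ioc c d))) := by
    rw [Measure.prod_restrict, ← Measure.volume_eq_prod]
    exact hi
  exact MeasureTheory.integral_integral_swap hi'


/-- Pull constants and sums out of a double interval integral of continuous functions. -/
lemma push2 (y0 y1 z0 z1 a b c : ℝ) (A B C : ℝ → ℝ → ℝ)
    (hA : Continuous (Function.uncurry A)) (hB : Continuous (Function.uncurry B))
    (hC : Continuous (Function.uncurry C)) :
    (∫ y in y0..y1, ∫ z in z0..z1, (a * A y z + b * B y z + c * C y z))
      = a * (∫ y in y0..y1, ∫ z in z0..z1, A y z)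
        + b * (∫ y in y0..y1, ∫ z in z0..z1, B y z)
        + c * (∫ y in y0..y1, ∫ z in z0..z1, C y z) := by
  have hAy : ∀ y, Continuous fun z => A y z := fun y => hA.comp (Continuous.prodMk_right y)
  have hBy : ∀ y, Continuous fun z => B y z := fun y => hB.comp (Continuous.prodMk_right y)
  have hCy : ∀ y, Continuous fun z => C y z := fun y => hC.comp (Continuous.prodMk_right y)
  have h1 : (fun y => ∫ z in z0..z1, (a * A y z + b * B y z + c * C y z))
      = fun y => a * (∫ z in z0..z1, A y z) + b * (∫ z in z0..z1, B y z)
        + c * (∫ z in z0..z1, C y z) := by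
    funext y
    have e1 : IntervalIntegrable (fun z => a * A y z) MeasureTheory.volume z0 z1 :=
      (continuous_const.mul (hAy y)).intervalIntegrable _ _
    have e2 : IntervalIntegrable (fun z => b * B y z) MeasureTheory.volume z0 z1 :=
      (continuous_const.mul (hBy y)).intervalIntegrable _ _
    have e3 : IntervalIntegrable (fun z => c * C y z) MeasureTheory.volume z0 z1 :=
      (continuous_const.mul (hCy y)).intervalIntegrable _ _
    rw [intervalIntegral.integral_add (e1.add e2) e3, intervalIntegral.integral_add e1 e2,
      intervalIntegral.integral_const_mul, intervalIntegral.integral_const_mul,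
      intervalIntegral.integral_const_mul]
  rw [h1]
  have cIA : Continuous fun y => ∫ z in z0..z1, A y z :=
    continuous_parametric_intervalIntegral_of_continuous' hA z0 z1
  have cIB : Continuous fun y => ∫ z in z0..z1, B y z :=
    continuous_parametric_intervalIntegral_of_continuous' hB z0 z1
  have cIC : Continuous fun y => ∫ z in z0..z1, C y z :=
    continuous_parametric_intervalIntegral_of_continuous' hC z0 z1
  have e1 : IntervalIntegrable (fun y => a * ∫ z in z0..z1, A y z) MeasureTheory.volume y0 y1 :=
    (continuous_const.mul cIA).intervalIntegrable _ _
  have e2 : IntervalIntegrable (fun y => b * ∫ z in z0..z1, B y z) MeasureTheory.volume y0 y1 :=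
    (continuous_const.mul cIB).intervalIntegrable _ _
  have e3 : IntervalIntegrable (fun y => c * ∫ z in z0..z1, C y z) MeasureTheory.volume y0 y1 :=
    (continuous_const.mul cIC).intervalIntegrable _ _
  rw [intervalIntegral.integral_add (e1.add e2) e3, intervalIntegral.integral_add e1 e2,
    intervalIntegral.integral_const_mul, intervalIntegral.integral_const_mul,
    intervalIntegral.integral_const_mul]

/-- 1D key identity. -/
lemma oneD (x0 x1 ex : ℝ) (hx : x0 < x1) (hex : ex = x1 - x0)
    (f f1 f2 f3 : ℝ → ℝ)
    (h1 : ∀ x ∈ Set.Icc x0 x1, HasDerivAt f (f1 x) x)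
    (h2 : ∀ x ∈ Set.Icc x0 x1, HasDerivAt f1 (f2 x) x)
    (h3 : ∀ x ∈ Set.Icc x0 x1, HasDerivAt f2 (f3 x) x)
    (hc : ContinuousOn f3 (Set.Icc x0 x1)) :
    f x0 + f x1 = 2 / ex * (∫ x in x0..x1, f x)
      + ex / 6 * (∫ x in x0..x1, f2 x)
      + 1 / ex * (∫ x in x0..x1,
          f3 x * (ex ^ 2 * (x - x0) / 6 - ex * (x - x0) ^ 2 / 2 + (x - x0) ^ 3 / 3)) := by
  have hex0 : ex ≠ 0 := by rw [hex]; linarith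
  have hicc : Set.uIcc x0 x1 = Set.Icc x0 x1 := Set.uIcc_of_le hx.le
  -- kernel polynomials
  have hid : ∀ x : ℝ, HasDerivAt (fun x : ℝ => x - x0) 1 x := fun x =>
    (hasDerivAt_id x).sub_const x0
  have hKd : ∀ x : ℝ, HasDerivAt
      (fun x => ex ^ 2 * (x - x0) / 6 - ex * (x - x0) ^ 2 / 2 + (x - x0) ^ 3 / 3)
      (ex ^ 2 / 6 - ex * (x - x0) + (x - x0) ^ 2) x := by
    intro x
    have p2 : HasDerivAt (fun x : ℝ => (x - x0) ^ 2) (2 * (x - x0)) x := by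
      simpa using (hid x).fun_pow 2
    have p3 : HasDerivAt (fun x : ℝ => (x - x0) ^ 3) (3 * (x - x0) ^ 2) x := by
      simpa using (hid x).fun_pow 3
    have := ((((hid x).const_mul (ex ^ 2)).div_const 6).fun_sub
      ((p2.const_mul ex).div_const 2)).fun_add (p3.div_const 3)
    exact this.congr_deriv (by ring)
  have hK1d : ∀ x : ℝ, HasDerivAt (fun x => ex ^ 2 / 6 - ex * (x - x0) + (x - x0) ^ 2)
      (-ex + 2 * (x - x0)) x := by
    intro x
    have p2 : HasDerivAt (fun x : ℝ => (x - x0) ^ 2) (2 * (x - x0)) x := by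
      simpa using (hid x).fun_pow 2
    have := ((hasDerivAt_const x (ex ^ 2 / 6)).fun_sub ((hid x).const_mul ex)).fun_add p2
    exact this.congr_deriv (by ring)
  have hK2d : ∀ x : ℝ, HasDerivAt (fun x => -ex + 2 * (x - x0)) 2 x := by
    intro x
    have := (hasDerivAt_const x (-ex)).fun_add ((hid x).const_mul 2)
    exact this.congr_deriv (by ring)
  set K : ℝ → ℝ := fun x => ex ^ 2 * (x - x0) / 6 - ex * (x - x0) ^ 2 / 2 + (x - x0) ^ 3 / 3
    with hK
  set K1 : ℝ → ℝ := fun x => ex ^ 2 / 6 - ex * (x - x0) + (x - x0) ^ 2 with hK1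
  set K2 : ℝ → ℝ := fun x => -ex + 2 * (x - x0) with hK2
  -- continuity of f, f1, f2 on Icc
  have hcf : ContinuousOn f (Set.Icc x0 x1) := fun x hx =>
    (h1 x hx).continuousAt.continuousWithinAt
  have hcf1 : ContinuousOn f1 (Set.Icc x0 x1) := fun x hx =>
    (h2 x hx).continuousAt.continuousWithinAt
  have hcf2 : ContinuousOn f2 (Set.Icc x0 x1) := fun x hx =>
    (h3 x hx).continuousAt.continuousWithinAt
  have hcK : Continuous K := by fun_prop
  have hintf : IntervalIntegrable f volume x0 x1 := by
    apply ContinuousOn.intervalIntegrable; rwa [hicc]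
  have hintf2 : IntervalIntegrable f2 volume x0 x1 := by
    apply ContinuousOn.intervalIntegrable; rwa [hicc]
  have hintf3K : IntervalIntegrable (fun x => f3 x * K x) volume x0 x1 := by
    apply ContinuousOn.intervalIntegrable
    rw [hicc]; exact hc.mul hcK.continuousOn
  have hint2f : IntervalIntegrable (fun x => 2 * f x) volume x0 x1 := by
    apply ContinuousOn.intervalIntegrable
    rw [hicc]; exact (continuousOn_const).mul hcf
  -- integral of f2
  have I2 : ∫ x in x0..x1, f2 x = f1 x1 - f1 x0 := by
    apply intervalIntegral.integral_eq_sub_of_hasDerivAt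
    · intro x hxm; rw [hicc] at hxm; exact h2 x hxm
    · exact hintf2
  -- the auxiliary function H and FTC
  set H : ℝ → ℝ := fun x => f1 x * K1 x - f2 x * K x - f x * K2 x with hH
  have IH : ∫ x in x0..x1, -(f3 x * K x + 2 * f x) = H x1 - H x0 := by
    apply intervalIntegral.integral_eq_sub_of_hasDerivAt
    · intro x hxm
      rw [hicc] at hxm
      have d := (((h2 x hxm).fun_mul (hK1d x)).fun_sub ((h3 x hxm).fun_mul (hKd x))).fun_sub
        ((h1 x hxm).fun_mul (hK2d x))
      convert d using 1
      simp only [hK, hK1, hK2]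
      ring
    · apply ContinuousOn.intervalIntegrable
      rw [hicc]
      exact ((hc.mul hcK.continuousOn).add ((continuousOn_const).mul hcf)).neg
  rw [intervalIntegral.integral_neg, intervalIntegral.integral_add hintf3K hint2f,
    intervalIntegral.integral_const_mul] at IH
  have hKx0 : K x0 = 0 := by simp [hK]
  have hKx1 : K x1 = 0 := by simp only [hK, hex]; ring
  have hK1x0 : K1 x0 = ex ^ 2 / 6 := by simp [hK1]
  have hK1x1 : K1 x1 = ex ^ 2 / 6 := by simp only [hK1, hex]; ring
  have hK2x0 : K2 x0 = -ex := by simp [hK2]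
  have hK2x1 : K2 x1 = ex := by simp only [hK2, hex]; ring
  simp only [hH, hKx0, hKx1, hK1x0, hK1x1, hK2x0, hK2x1] at IH
  rw [I2]
  have hgK : (∫ x in x0..x1,
      f3 x * (ex ^ 2 * (x - x0) / 6 - ex * (x - x0) ^ 2 / 2 + (x - x0) ^ 3 / 3))
      = ∫ x in x0..x1, f3 x * K x := rfl
  rw [hgK]
  field_simp
  linear_combination 6 * IH

theorem stmt16 (x0 x1 y0 y1 z0 z1 : ℝ) (hx : x0 < x1) (hy : y0 < y1) (hz : z0 < z1)
    (ex ey ez : ℝ)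
    (hex : ex = x1 - x0) (hey : ey = y1 - y0) (hez : ez = z1 - z0)
    -- `u` is three times continuously differentiable on a neighborhood `U` of `T`
    (u : ℝ → ℝ → ℝ → ℝ) (U : Set (ℝ × ℝ × ℝ)) (hU : IsOpen U)
    (hTU : Set.Icc x0 x1 ×ˢ Set.Icc y0 y1 ×ˢ Set.Icc z0 z1 ⊆ U)
    (hu : ContDiffOn ℝ 3 (fun p : ℝ × ℝ × ℝ => u p.1 p.2.1 p.2.2) U)
    (Kx : ℝ → ℝ)
    (hKx : ∀ x : ℝ, Kx x = ex ^ 2 * (x - x0) / 6 - ex * (x - x0) ^ 2 / 2 + (x - x0) ^ 3 / 3) :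
    (∫ y in y0..y1, ∫ z in z0..z1, u x0 y z) + (∫ y in y0..y1, ∫ z in z0..z1, u x1 y z)
      = 2 / ex * (∫ x in x0..x1, ∫ y in y0..y1, ∫ z in z0..z1, u x y z)
        + ex / 6 * (∫ x in x0..x1, ∫ y in y0..y1, ∫ z in z0..z1,
            deriv^[2] (fun t => u t y z) x)
        + 1 / ex * (∫ x in x0..x1, ∫ y in y0..y1, ∫ z in z0..z1,
            deriv^[3] (fun t => u t y z) x * Kx x) := by
  simp only [hKx]
  set F : ℝ × ℝ × ℝ → ℝ := fun p => u p.1 p.2.1 p.2.2 with hFdef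
  have h32 : (3 : WithTop ℕ∞) = 2 + 1 := by norm_num
  have h21 : (2 : WithTop ℕ∞) = 1 + 1 := by norm_num
  have h10 : (1 : WithTop ℕ∞) = 0 + 1 := by norm_num
  rw [h32] at hu
  obtain ⟨hdF, -, hCdF⟩ := (contDiffOn_succ_iff_fderiv_of_isOpen hU).1 hu
  set g1 : ℝ × ℝ × ℝ → ℝ := fun p => fderiv ℝ F p (1, 0, 0) with hg1def
  have hg1 : ContDiffOn ℝ 2 g1 U := hCdF.clm_apply contDiffOn_const
  rw [h21] at hg1
  obtain ⟨hdg1, -, hCdg1⟩ := (contDiffOn_succ_iff_fderiv_of_isOpen hU).1 hg1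
  set g2 : ℝ × ℝ × ℝ → ℝ := fun p => fderiv ℝ g1 p (1, 0, 0) with hg2def
  have hg2 : ContDiffOn ℝ 1 g2 U := hCdg1.clm_apply contDiffOn_const
  rw [h10] at hg2
  obtain ⟨hdg2, -, hCdg2⟩ := (contDiffOn_succ_iff_fderiv_of_isOpen hU).1 hg2
  set g3 : ℝ × ℝ × ℝ → ℝ := fun p => fderiv ℝ g2 p (1, 0, 0) with hg3def
  have hg3 : ContinuousOn g3 U := (hCdg2.clm_apply contDiffOn_const).continuousOn
  -- derivative transfer to lines
  have hL : ∀ (y z t : ℝ), HasDerivAt (fun s : ℝ => ((s, y, z) : ℝ × ℝ × ℝ)) (1, 0, 0) t :=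
    fun y z t => (hasDerivAt_id t).prodMk (hasDerivAt_const t (y, z))
  have hDf : ∀ y z t, (t, y, z) ∈ U → HasDerivAt (fun s => u s y z) (g1 (t, y, z)) t := by
    intro y z t hp
    exact ((hdF.differentiableAt (hU.mem_nhds hp)).hasFDerivAt).comp_hasDerivAt t (hL y z t)
  have hDg1 : ∀ y z t, (t, y, z) ∈ U → HasDerivAt (fun s => g1 (s, y, z)) (g2 (t, y, z)) t := by
    intro y z t hp
    exact ((hdg1.differentiableAt (hU.mem_nhds hp)).hasFDerivAt).comp_hasDerivAt t (hL y z t)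
  have hDg2 : ∀ y z t, (t, y, z) ∈ U → HasDerivAt (fun s => g2 (s, y, z)) (g3 (t, y, z)) t := by
    intro y z t hp
    exact ((hdg2.differentiableAt (hU.mem_nhds hp)).hasFDerivAt).comp_hasDerivAt t (hL y z t)
  have hVopen : ∀ y z : ℝ, IsOpen {s : ℝ | ((s, y, z) : ℝ × ℝ × ℝ) ∈ U} := by
    intro y z
    exact hU.preimage (by fun_prop)
  have e2 : ∀ y z t, (t, y, z) ∈ U → deriv^[2] (fun s => u s y z) t = g2 (t, y, z) := by
    intro y z t ht
    have hev : deriv (fun s => u s y z) =ᶠ[nhds t] fun s => g1 (s, y, z) :=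
      Filter.eventuallyEq_of_mem ((hVopen y z).mem_nhds ht) fun s hs => (hDf y z s hs).deriv
    show deriv (deriv (fun s => u s y z)) t = g2 (t, y, z)
    rw [hev.deriv_eq]
    exact (hDg1 y z t ht).deriv
  have e3 : ∀ y z t, (t, y, z) ∈ U → deriv^[3] (fun s => u s y z) t = g3 (t, y, z) := by
    intro y z t ht
    have hev : deriv^[2] (fun s => u s y z) =ᶠ[nhds t] fun s => g2 (s, y, z) :=
      Filter.eventuallyEq_of_mem ((hVopen y z).mem_nhds ht) fun s hs => e2 y z s hs
    show deriv (deriv^[2] (fun s => u s y z)) t = g3 (t, y, z)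
    rw [hev.deriv_eq]
    exact (hDg2 y z t ht).deriv
  have hmem : ∀ {x y z : ℝ}, x ∈ Set.Icc x0 x1 → y ∈ Set.Icc y0 y1 → z ∈ Set.Icc z0 z1 →
      ((x, y, z) : ℝ × ℝ × ℝ) ∈ U := fun hx' hy' hz' => hTU ⟨hx', hy', hz'⟩
  -- the one-dimensional identity on each line
  have key : ∀ y ∈ Set.Icc y0 y1, ∀ z ∈ Set.Icc z0 z1,
      u x0 y z + u x1 y z = 2 / ex * (∫ x in x0..x1, u x y z)
        + ex / 6 * (∫ x in x0..x1, g2 (x, y, z))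
        + 1 / ex * (∫ x in x0..x1, g3 (x, y, z) *
            (ex ^ 2 * (x - x0) / 6 - ex * (x - x0) ^ 2 / 2 + (x - x0) ^ 3 / 3)) := by
    intro y hy' z hz'
    exact oneD x0 x1 ex hx hex (fun t => u t y z) (fun t => g1 (t, y, z))
      (fun t => g2 (t, y, z)) (fun t => g3 (t, y, z))
      (fun t ht => hDf y z t (hmem ht hy' hz'))
      (fun t ht => hDg1 y z t (hmem ht hy' hz'))
      (fun t ht => hDg2 y z t (hmem ht hy' hz'))
      (hg3.comp (Continuous.continuousOn (by fun_prop)) (fun t ht => hmem ht hy' hz'))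
  -- continuous global extensions
  set B : Set (ℝ × ℝ × ℝ) := Set.Icc x0 x1 ×ˢ Set.Icc y0 y1 ×ˢ Set.Icc z0 z1 with hBdef
  have hBc : IsClosed B := isClosed_Icc.prod (isClosed_Icc.prod isClosed_Icc)
  obtain ⟨G0, hG0c, hG0⟩ := ext3 hBc F ((hu.continuousOn).mono hTU)
  obtain ⟨G2, hG2c, hG2⟩ := ext3 hBc g2 ((hg2.continuousOn).mono hTU)
  obtain ⟨G3, hG3c, hG3⟩ := ext3 hBc g3 (hg3.mono hTU)
  have hmemB : ∀ {x y z : ℝ}, x ∈ Set.Icc x0 x1 → y ∈ Set.Icc y0 y1 → z ∈ Set.Icc z0 z1 →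
      ((x, y, z) : ℝ × ℝ × ℝ) ∈ B := fun hx' hy' hz' => ⟨hx', hy', hz'⟩
  have hx0m : x0 ∈ Set.Icc x0 x1 := Set.left_mem_Icc.2 hx.le
  have hx1m : x1 ∈ Set.Icc x0 x1 := Set.right_mem_Icc.2 hx.le
  -- rewrite triple integrals on the RHS
  have hT1 : (∫ x in x0..x1, ∫ y in y0..y1, ∫ z in z0..z1, u x y z)
      = ∫ x in x0..x1, ∫ y in y0..y1, ∫ z in z0..z1, G0 (x, y, z) := by
    apply intervalIntegral.integral_congr; intro x hx'
    rw [Set.uIcc_of_le hx.le] at hx'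
    apply intervalIntegral.integral_congr; intro y hy'
    rw [Set.uIcc_of_le hy.le] at hy'
    apply intervalIntegral.integral_congr; intro z hz'
    rw [Set.uIcc_of_le hz.le] at hz'
    exact (hG0 (x, y, z) (hmemB hx' hy' hz')).symm
  have hT2 : (∫ x in x0..x1, ∫ y in y0..y1, ∫ z in z0..z1, deriv^[2] (fun t => u t y z) x)
      = ∫ x in x0..x1, ∫ y in y0..y1, ∫ z in z0..z1, G2 (x, y, z) := by
    apply intervalIntegral.integral_congr; intro x hx'
    rw [Set.uIcc_of_le hx.le] at hx'
    apply intervalIntegral.integral_congr; intro y hy'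
    rw [Set.uIcc_of_le hy.le] at hy'
    apply intervalIntegral.integral_congr; intro z hz'
    rw [Set.uIcc_of_le hz.le] at hz'
    exact (e2 y z x (hmem hx' hy' hz')).trans (hG2 (x, y, z) (hmemB hx' hy' hz')).symm
  have hT3 : (∫ x in x0..x1, ∫ y in y0..y1, ∫ z in z0..z1, deriv^[3] (fun t => u t y z) x *
        (ex ^ 2 * (x - x0) / 6 - ex * (x - x0) ^ 2 / 2 + (x - x0) ^ 3 / 3))
      = ∫ x in x0..x1, ∫ y in y0..y1, ∫ z in z0..z1, G3 (x, y, z) *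
        (ex ^ 2 * (x - x0) / 6 - ex * (x - x0) ^ 2 / 2 + (x - x0) ^ 3 / 3) := by
    apply intervalIntegral.integral_congr; intro x hx'
    rw [Set.uIcc_of_le hx.le] at hx'
    apply intervalIntegral.integral_congr; intro y hy'
    rw [Set.uIcc_of_le hy.le] at hy'
    apply intervalIntegral.integral_congr; intro z hz'
    rw [Set.uIcc_of_le hz.le] at hz'
    exact congrArg (fun w => w * (ex ^ 2 * (x - x0) / 6 - ex * (x - x0) ^ 2 / 2 + (x - x0) ^ 3 / 3))
      ((e3 y z x (hmem hx' hy' hz')).trans (hG3 (x, y, z) (hmemB hx' hy' hz')).symm)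
  -- rewrite the LHS with the extension
  have hL0 : ∀ xx, xx ∈ Set.Icc x0 x1 →
      (∫ y in y0..y1, ∫ z in z0..z1, u xx y z)
        = ∫ y in y0..y1, ∫ z in z0..z1, G0 (xx, y, z) := by
    intro xx hxx
    apply intervalIntegral.integral_congr; intro y hy'
    rw [Set.uIcc_of_le hy.le] at hy'
    apply intervalIntegral.integral_congr; intro z hz'
    rw [Set.uIcc_of_le hz.le] at hz'
    exact (hG0 (xx, y, z) (hmemB hxx hy' hz')).symm
  -- the key identity, in terms of extensions
  have keyG : ∀ y ∈ Set.Icc y0 y1, ∀ z ∈ Set.Icc z0 z1,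
      G0 (x0, y, z) + G0 (x1, y, z)
        = 2 / ex * (∫ x in x0..x1, G0 (x, y, z))
          + ex / 6 * (∫ x in x0..x1, G2 (x, y, z))
          + 1 / ex * (∫ x in x0..x1, G3 (x, y, z) *
              (ex ^ 2 * (x - x0) / 6 - ex * (x - x0) ^ 2 / 2 + (x - x0) ^ 3 / 3)) := by
    intro y hy' z hz'
    rw [hG0 _ (hmemB hx0m hy' hz'), hG0 _ (hmemB hx1m hy' hz'), key y hy' z hz']
    congr 1
    · congr 2
      · apply intervalIntegral.integral_congr; intro x hx'
        rw [Set.uIcc_of_le hx.le] at hx'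
        exact (hG0 (x, y, z) (hmemB hx' hy' hz')).symm
      · apply intervalIntegral.integral_congr; intro x hx'
        rw [Set.uIcc_of_le hx.le] at hx'
        simp only [hG2 (x, y, z) (hmemB hx' hy' hz')]
    · congr 1
      apply intervalIntegral.integral_congr; intro x hx'
      rw [Set.uIcc_of_le hx.le] at hx'
      simp only [hG3 (x, y, z) (hmemB hx' hy' hz')]
  -- set up continuity facts
  set P : ℝ → ℝ := fun x => ex ^ 2 * (x - x0) / 6 - ex * (x - x0) ^ 2 / 2 + (x - x0) ^ 3 / 3
    with hPdef
  have hPc : Continuous P := by fun_prop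
  set G3' : ℝ × ℝ × ℝ → ℝ := fun p => G3 p * P p.1 with hG3'def
  have hG3'c : Continuous G3' := by fun_prop
  -- swapping lemma for continuous integrands
  have sw : ∀ G : ℝ × ℝ × ℝ → ℝ, Continuous G →
      (∫ y in y0..y1, ∫ z in z0..z1, ∫ x in x0..x1, G (x, y, z))
        = ∫ x in x0..x1, ∫ y in y0..y1, ∫ z in z0..z1, G (x, y, z) := by
    intro G hG
    have s1 : ∀ y : ℝ, (∫ z in z0..z1, ∫ x in x0..x1, G (x, y, z))
        = ∫ x in x0..x1, ∫ z in z0..z1, G (x, y, z) := fun y =>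
      swapCont z0 z1 x0 x1 hz.le hx.le (fun z x => G (x, y, z)) (by fun_prop)
    have h1 : (∫ y in y0..y1, ∫ z in z0..z1, ∫ x in x0..x1, G (x, y, z))
        = ∫ y in y0..y1, ∫ x in x0..x1, ∫ z in z0..z1, G (x, y, z) := by
      apply intervalIntegral.integral_congr; intro y _; exact s1 y
    rw [h1]
    exact swapCont y0 y1 x0 x1 hy.le hx.le (fun y x => ∫ z in z0..z1, G (x, y, z))
      (continuous_parametric_intervalIntegral_of_continuous'
        (f := fun (p : ℝ × ℝ) z => G (p.2, p.1, z)) (by fun_prop) z0 z1)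
  -- continuity of the partial integrals
  have cA : Continuous (Function.uncurry fun y z => ∫ x in x0..x1, G0 (x, y, z)) :=
    continuous_parametric_intervalIntegral_of_continuous'
      (f := fun (p : ℝ × ℝ) x => G0 (x, p.1, p.2)) (by fun_prop) x0 x1
  have cB : Continuous (Function.uncurry fun y z => ∫ x in x0..x1, G2 (x, y, z)) :=
    continuous_parametric_intervalIntegral_of_continuous'
      (f := fun (p : ℝ × ℝ) x => G2 (x, p.1, p.2)) (by fun_prop) x0 x1
  have cC : Continuous (Function.uncurry fun y z => ∫ x in x0..x1, G3' (x, y, z)) :=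
    continuous_parametric_intervalIntegral_of_continuous'
      (f := fun (p : ℝ × ℝ) x => G3' (x, p.1, p.2)) (by fun_prop) x0 x1
  -- main computation
  rw [hT1, hT2, hT3, hL0 x0 hx0m, hL0 x1 hx1m]
  have i1 : IntervalIntegrable (fun y => ∫ z in z0..z1, G0 (x0, y, z)) volume y0 y1 :=
    (continuous_parametric_intervalIntegral_of_continuous'
      (f := fun (y : ℝ) z => G0 (x0, y, z)) (by fun_prop) z0 z1).intervalIntegrable _ _
  have i2 : IntervalIntegrable (fun y => ∫ z in z0..z1, G0 (x1, y, z)) volume y0 y1 :=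
    (continuous_parametric_intervalIntegral_of_continuous'
      (f := fun (y : ℝ) z => G0 (x1, y, z)) (by fun_prop) z0 z1).intervalIntegrable _ _
  rw [← intervalIntegral.integral_add i1 i2]
  have step1 : (∫ y in y0..y1,
      ((∫ z in z0..z1, G0 (x0, y, z)) + ∫ z in z0..z1, G0 (x1, y, z)))
      = ∫ y in y0..y1, ∫ z in z0..z1,
          (2 / ex * (∫ x in x0..x1, G0 (x, y, z))
            + ex / 6 * (∫ x in x0..x1, G2 (x, y, z))
            + 1 / ex * (∫ x in x0..x1, G3' (x, y, z))) := by
    apply intervalIntegral.integral_congr; intro y hy'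
    rw [Set.uIcc_of_le hy.le] at hy'
    show ((∫ z in z0..z1, G0 (x0, y, z)) + ∫ z in z0..z1, G0 (x1, y, z))
      = ∫ z in z0..z1, (2 / ex * (∫ x in x0..x1, G0 (x, y, z))
          + ex / 6 * (∫ x in x0..x1, G2 (x, y, z))
          + 1 / ex * (∫ x in x0..x1, G3' (x, y, z)))
    have j1 : IntervalIntegrable (fun z => G0 (x0, y, z)) MeasureTheory.volume z0 z1 :=
      Continuous.intervalIntegrable (by fun_prop) z0 z1
    have j2 : IntervalIntegrable (fun z => G0 (x1, y, z)) MeasureTheory.volume z0 z1 :=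
      Continuous.intervalIntegrable (by fun_prop) z0 z1
    rw [← intervalIntegral.integral_add j1 j2]
    apply intervalIntegral.integral_congr; intro z hz'
    rw [Set.uIcc_of_le hz.le] at hz'
    exact keyG y hy' z hz'
  rw [step1, push2 y0 y1 z0 z1 (2 / ex) (ex / 6) (1 / ex) _ _ _ cA cB cC,
    sw G0 hG0c, sw G2 hG2c, sw G3' hG3'c]
end

section
/- Let $u$ be three times continuously differentiable on a neighborhood of $T$, let $\bar u_{F}=\frac{1}{|F|}\int_F u\,dS$ denote the average of $u$ over a face $F$, and define $K_x(x)=\frac{e_x^2(x-x_0)}{6}-\frac{e_x(x-x_0)^2}{2}+\frac{(x-x_0)^3}{3}$ and $K_z(z)=\frac{e_z^2(z-z_0)}{6}-\frac{e_z(z-z_0)^2}{2}+\frac{(z-z_0)^3}{3}$. Then $e_ye_z\big(\bar u_{F_1}+\bar u_{F_2}-\bar u_{F_5}-\bar u_{F_6}\big)=\frac{1}{6}\left(e_x\int_T \partial_x^2 u\,dV-\frac{e_z^2}{e_x}\int_T \partial_z^2 u\,dV\right)+\frac{1}{e_x}\int_T \partial_x^3 u\,K_x(x)\,dV-\frac{1}{e_x}\int_T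 \partial_z^3 u\,K_z(z)\,dV$. -/
open MeasureTheory intervalIntegral Set Function

section helpers

lemma dblInt_congr {a b c d : ℝ} {f g : ℝ → ℝ → ℝ}
    (hab : a ≤ b) (hcd : c ≤ d)
    (h : ∀ s ∈ Set.Icc a b, ∀ t ∈ Set.Icc c d, f s t = g s t) :
    (∫ s in a..b, ∫ t in c..d, f s t) = ∫ s in a..b, ∫ t in c..d, g s t := by
  refine intervalIntegral.integral_congr fun s hs => ?_
  rw [Set.uIcc_of_le hab] at hs
  refine intervalIntegral.integral_congr fun t ht => ?_
  rw [Set.uIcc_of_le hcd] at ht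
  exact h s hs t ht

lemma tripInt_congr {a b c d p q : ℝ} {f g : ℝ → ℝ → ℝ → ℝ}
    (hab : a ≤ b) (hcd : c ≤ d) (hpq : p ≤ q)
    (h : ∀ s ∈ Set.Icc a b, ∀ t ∈ Set.Icc c d, ∀ r ∈ Set.Icc p q, f s t r = g s t r) :
    (∫ s in a..b, ∫ t in c..d, ∫ r in p..q, f s t r)
      = ∫ s in a..b, ∫ t in c..d, ∫ r in p..q, g s t r := by
  refine intervalIntegral.integral_congr fun s hs => ?_
  rw [Set.uIcc_of_le hab] at hs
  exact dblInt_congr hcd hpq (h s hs)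

end helpers

open MeasureTheory intervalIntegral Set

lemma oneD_s17 (a b : ℝ) (hab : a < b) (V : Set ℝ) (hV : IsOpen V) (hIV : Set.Icc a b ⊆ V)
    (f : ℝ → ℝ) (hf : ContDiffOn ℝ 3 f V) (K : ℝ → ℝ)
    (hK : ∀ x, K x = (b-a)^2*(x-a)/6 - (b-a)*(x-a)^2/2 + (x-a)^3/3) :
    (b-a)*(f a + f b) = 2*(∫ x in a..b, f x) + (b-a)^2/6 * (∫ x in a..b, deriv^[2] f x)
      + ∫ x in a..b, deriv^[3] f x * K x := by
  have hKf : K = fun x => (b-a)^2*(x-a)/6 - (b-a)*(x-a)^2/2 + (x-a)^3/3 := funext hK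
  subst hKf
  set e := b - a with he
  -- derivatives of f
  set f1 := deriv f with hf1d
  set f2 := deriv f1 with hf2d
  set f3 := deriv f2 with hf3d
  have hit2 : deriv^[2] f = f2 := rfl
  have hit3 : deriv^[3] f = f3 := rfl
  have hcf1 : ContDiffOn ℝ 2 f1 V := hf.deriv_of_isOpen hV (by norm_num)
  have hcf2 : ContDiffOn ℝ 1 f2 V := hcf1.deriv_of_isOpen hV (by norm_num)
  have hcf3 : ContinuousOn f3 V := hcf2.continuousOn_deriv_of_isOpen hV (by norm_num)
  have hmem : ∀ x ∈ Set.uIcc a b, x ∈ V := by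
    intro x hx; exact hIV (by rwa [Set.uIcc_of_le hab.le] at hx)
  have hD : ∀ (g : ℝ → ℝ), ContDiffOn ℝ 1 g V → ∀ x ∈ Set.uIcc a b,
      HasDerivAt g (deriv g x) x := by
    intro g hg x hx
    exact ((hg.differentiableOn (by norm_num)).differentiableAt
      (hV.mem_nhds (hmem x hx))).hasDerivAt
  have hDf : ∀ x ∈ Set.uIcc a b, HasDerivAt f (f1 x) x := hD f (hf.of_le (by norm_num))
  have hDf1 : ∀ x ∈ Set.uIcc a b, HasDerivAt f1 (f2 x) x := hD f1 (hcf1.of_le (by norm_num))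
  have hDf2 : ∀ x ∈ Set.uIcc a b, HasDerivAt f2 (f3 x) x := hD f2 hcf2
  -- kernel derivatives
  set K0 : ℝ → ℝ := fun x => e^2*(x-a)/6 - e*(x-a)^2/2 + (x-a)^3/3 with hK0
  set K1 : ℝ → ℝ := fun x => e^2/6 - e*(x-a) + (x-a)^2 with hK1
  set K2 : ℝ → ℝ := fun x => 2*(x-a) - e with hK2
  have hxa : ∀ x : ℝ, HasDerivAt (fun t => t - a) 1 x := fun x => (hasDerivAt_id x).sub_const a
  have hDK0 : ∀ x : ℝ, HasDerivAt K0 (K1 x) x := by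
    intro x
    have h2 : HasDerivAt (fun t : ℝ => (t-a)^2) (2*(x-a)) x := by
      simpa using (hxa x).fun_pow 2
    have h3 : HasDerivAt (fun t : ℝ => (t-a)^3) (3*(x-a)^2) x := by
      simpa using (hxa x).fun_pow 3
    have := (((hxa x).const_mul (e^2)).div_const 6 |>.fun_sub
      ((h2.const_mul e).div_const 2)).fun_add (h3.div_const 3)
    exact this.congr_deriv (by ring)
  have hDK1 : ∀ x : ℝ, HasDerivAt K1 (K2 x) x := by
    intro x
    have h2 : HasDerivAt (fun t : ℝ => (t-a)^2) (2*(x-a)) x := by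
      simpa using (hxa x).fun_pow 2
    have := ((hasDerivAt_const x (e^2/6)).fun_sub ((hxa x).const_mul e)).fun_add h2
    exact this.congr_deriv (by ring)
  have hDK2 : ∀ x : ℝ, HasDerivAt K2 (2:ℝ) x := by
    intro x
    have := ((hxa x).const_mul 2).sub_const e
    exact this.congr_deriv (by ring)
  -- continuity / integrability
  have hKc : Continuous K0 := by fun_prop
  have hK1c : Continuous K1 := by fun_prop
  have hK2c : Continuous K2 := by fun_prop
  have hIf : IntervalIntegrable f volume a b :=
    ((hf.continuousOn).mono (fun x hx => hmem x hx)).intervalIntegrable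
  have hIf1 : IntervalIntegrable f1 volume a b :=
    ((hcf1.continuousOn).mono (fun x hx => hmem x hx)).intervalIntegrable
  have hIf2 : IntervalIntegrable f2 volume a b :=
    ((hcf2.continuousOn).mono (fun x hx => hmem x hx)).intervalIntegrable
  have hIf3 : IntervalIntegrable f3 volume a b :=
    (hcf3.mono (fun x hx => hmem x hx)).intervalIntegrable
  -- integration by parts, three times
  have ibp1 : ∫ x in a..b, K0 x * f3 x
      = K0 b * f2 b - K0 a * f2 a - ∫ x in a..b, K1 x * f2 x :=
    integral_mul_deriv_eq_deriv_mul (fun x _ => hDK0 x) hDf2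
      (hK1c.intervalIntegrable a b) hIf3
  have ibp2 : ∫ x in a..b, K1 x * f2 x
      = K1 b * f1 b - K1 a * f1 a - ∫ x in a..b, K2 x * f1 x :=
    integral_mul_deriv_eq_deriv_mul (fun x _ => hDK1 x) hDf1
      (hK2c.intervalIntegrable a b) hIf2
  have ibp3 : ∫ x in a..b, K2 x * f1 x
      = K2 b * f b - K2 a * f a - ∫ x in a..b, 2 * f x :=
    integral_mul_deriv_eq_deriv_mul (fun x _ => hDK2 x) hDf
      ((continuous_const : Continuous fun _ : ℝ => (2:ℝ)).intervalIntegrable a b) hIf1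
  have hconst : (∫ x in a..b, 2 * f x) = 2 * ∫ x in a..b, f x :=
    intervalIntegral.integral_const_mul 2 f
  -- FTC for ∫ f2
  have hftc : (∫ x in a..b, f2 x) = f1 b - f1 a :=
    intervalIntegral.integral_eq_sub_of_hasDerivAt hDf1 hIf2
  -- values of K at endpoints
  have hK0a : K0 a = 0 := by simp [hK0]
  have hK0b : K0 b = 0 := by simp only [hK0, he]; ring
  have hK1a : K1 a = e^2/6 := by simp [hK1]
  have hK1b : K1 b = e^2/6 := by simp only [hK1, he]; ring
  have hK2a : K2 a = -e := by simp [hK2]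
  have hK2b : K2 b = e := by simp only [hK2, he]; ring
  have hcomm : (∫ x in a..b, deriv^[3] f x * K0 x) = ∫ x in a..b, K0 x * f3 x := by
    rw [hit3]; exact intervalIntegral.integral_congr fun x _ => mul_comm _ _
  rw [hit2, hcomm, hftc, ibp1, ibp2, ibp3, hconst, hK0a, hK0b, hK1a, hK1b, hK2a, hK2b]
  ring

open MeasureTheory intervalIntegral Set

noncomputable def Dv (v : ℝ×ℝ×ℝ) (G : ℝ×ℝ×ℝ → ℝ) : ℝ×ℝ×ℝ → ℝ := fun p => fderiv ℝ G p v

lemma contDiffOn_Dv {U : Set (ℝ×ℝ×ℝ)} (hU : IsOpen U) {G : ℝ×ℝ×ℝ → ℝ} {v : ℝ×ℝ×ℝ}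
    {n : ℕ} (hG : ContDiffOn ℝ (n+1 : ℕ) G U) : ContDiffOn ℝ n (Dv v G) U := by
  have h : ContDiffOn ℝ n (fderiv ℝ G) U :=
    hG.fderiv_of_isOpen hU (by exact_mod_cast le_refl ((n:WithTop ℕ∞)+1))
  exact h.clm_apply contDiffOn_const

lemma hasDerivAt_slice {U : Set (ℝ×ℝ×ℝ)} (hU : IsOpen U) {G : ℝ×ℝ×ℝ → ℝ}
    (hG : ContDiffOn ℝ 1 G U) {ℓ : ℝ → ℝ×ℝ×ℝ} {v : ℝ×ℝ×ℝ}
    (hℓ : ∀ t, HasDerivAt ℓ v t) {x : ℝ} (hx : ℓ x ∈ U) :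
    HasDerivAt (fun t => G (ℓ t)) (Dv v G (ℓ x)) x := by
  have hd : DifferentiableAt ℝ G (ℓ x) :=
    (hG.differentiableOn one_ne_zero).differentiableAt (hU.mem_nhds hx)
  exact hd.hasFDerivAt.comp_hasDerivAt x (hℓ x)

lemma deriv_slice {U : Set (ℝ×ℝ×ℝ)} (hU : IsOpen U) {G : ℝ×ℝ×ℝ → ℝ}
    (hG : ContDiffOn ℝ 1 G U) {ℓ : ℝ → ℝ×ℝ×ℝ} {v : ℝ×ℝ×ℝ}
    (hℓ : ∀ t, HasDerivAt ℓ v t) {x : ℝ} (hx : ℓ x ∈ U) :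
    deriv (fun t => G (ℓ t)) x = Dv v G (ℓ x) :=
  (hasDerivAt_slice hU hG hℓ hx).deriv

lemma deriv2_slice {U : Set (ℝ×ℝ×ℝ)} (hU : IsOpen U) {G : ℝ×ℝ×ℝ → ℝ}
    (hG : ContDiffOn ℝ 2 G U) {ℓ : ℝ → ℝ×ℝ×ℝ} {v : ℝ×ℝ×ℝ}
    (hℓ : ∀ t, HasDerivAt ℓ v t) {x : ℝ} (hx : ℓ x ∈ U) :
    deriv^[2] (fun t => G (ℓ t)) x = Dv v (Dv v G) (ℓ x) := by
  have hℓc : Continuous ℓ := continuous_iff_continuousAt.2 fun t => (hℓ t).continuousAt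
  have hopen : IsOpen {t : ℝ | ℓ t ∈ U} := hU.preimage hℓc
  have hev : deriv (fun t => G (ℓ t)) =ᶠ[nhds x] fun t => Dv v G (ℓ t) := by
    filter_upwards [hopen.mem_nhds hx] with t ht
    exact deriv_slice hU (hG.of_le one_le_two) hℓ ht
  show deriv (deriv (fun t => G (ℓ t))) x = _
  rw [hev.deriv_eq]
  exact deriv_slice hU (contDiffOn_Dv hU (show ContDiffOn ℝ (1+1 : ℕ) G U by exact_mod_cast hG)) hℓ hx

lemma deriv3_slice {U : Set (ℝ×ℝ×ℝ)} (hU : IsOpen U) {G : ℝ×ℝ×ℝ → ℝ}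
    (hG : ContDiffOn ℝ 3 G U) {ℓ : ℝ → ℝ×ℝ×ℝ} {v : ℝ×ℝ×ℝ}
    (hℓ : ∀ t, HasDerivAt ℓ v t) {x : ℝ} (hx : ℓ x ∈ U) :
    deriv^[3] (fun t => G (ℓ t)) x = Dv v (Dv v (Dv v G)) (ℓ x) := by
  have hℓc : Continuous ℓ := continuous_iff_continuousAt.2 fun t => (hℓ t).continuousAt
  have hopen : IsOpen {t : ℝ | ℓ t ∈ U} := hU.preimage hℓc
  have hev : deriv^[2] (fun t => G (ℓ t)) =ᶠ[nhds x] fun t => Dv v (Dv v G) (ℓ t) := by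
    filter_upwards [hopen.mem_nhds hx] with t ht
    exact deriv2_slice hU (hG.of_le (by norm_num)) hℓ ht
  show deriv (deriv^[2] (fun t => G (ℓ t))) x = _
  rw [hev.deriv_eq]
  have h1 : ContDiffOn ℝ (1+1+1 : ℕ) G U := by exact_mod_cast hG
  exact deriv_slice hU (contDiffOn_Dv hU (contDiffOn_Dv hU h1)) hℓ hx

open MeasureTheory intervalIntegral Set Function

lemma extend_cont {s : Set (ℝ×ℝ×ℝ)} (hs : IsClosed s) (H : ℝ×ℝ×ℝ → ℝ)
    (hH : ContinuousOn H s) :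
    ∃ G : ℝ×ℝ×ℝ → ℝ, Continuous G ∧ ∀ p ∈ s, G p = H p := by
  obtain ⟨g, hg⟩ := ContinuousMap.exists_restrict_eq hs ⟨s.restrict H, hH.restrict⟩
  refine ⟨g, g.continuous, fun p hp => ?_⟩
  exact ContinuousMap.congr_fun hg ⟨p, hp⟩

lemma swap2 (f : ℝ → ℝ → ℝ) (hf : Continuous (Function.uncurry f)) (a b c d : ℝ)
    (hab : a ≤ b) (hcd : c ≤ d) :
    (∫ s in a..b, ∫ t in c..d, f s t) = ∫ t in c..d, ∫ s in a..b, f s t := by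
  have hint : Integrable (uncurry f)
      ((volume.restrict (Set.Ioc a b)).prod (volume.restrict (Set.Ioc c d))) := by
    rw [Measure.prod_restrict, ← Measure.volume_eq_prod]
    exact (hf.continuousOn.integrableOn_compact (isCompact_Icc.prod isCompact_Icc)).mono_set
      (Set.prod_mono Set.Ioc_subset_Icc_self Set.Ioc_subset_Icc_self)
  have := MeasureTheory.integral_integral_swap hint
  rw [intervalIntegral.integral_of_le hab, intervalIntegral.integral_of_le hcd]
  simp_rw [intervalIntegral.integral_of_le hcd, intervalIntegral.integral_of_le hab]
  exact this

lemma contParam {X : Type*} [TopologicalSpace X] [FirstCountableTopology X]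
    [LocallyCompactSpace X] (g : X × ℝ → ℝ) (hg : Continuous g) (c d : ℝ) :
    Continuous fun x => ∫ t in c..d, g (x, t) :=
  intervalIntegral.continuous_parametric_intervalIntegral_of_continuous'
    (f := fun x t => g (x, t)) (by exact hg) c d

lemma swap3 (H : ℝ×ℝ×ℝ → ℝ) (hH : Continuous H) (x0 x1 y0 y1 z0 z1 : ℝ)
    (hx : x0 ≤ x1) (hy : y0 ≤ y1) (hz : z0 ≤ z1) :
    (∫ y in y0..y1, ∫ z in z0..z1, ∫ x in x0..x1, H (x,y,z))
      = ∫ x in x0..x1, ∫ y in y0..y1, ∫ z in z0..z1, H (x,y,z) := by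
  have step1 : ∀ y : ℝ, (∫ z in z0..z1, ∫ x in x0..x1, H (x,y,z))
      = ∫ x in x0..x1, ∫ z in z0..z1, H (x,y,z) := by
    intro y
    exact swap2 (fun z x => H (x,y,z)) (by fun_prop) z0 z1 x0 x1 hz hx
  simp_rw [step1]
  have hcont : Continuous (Function.uncurry fun y x => ∫ z in z0..z1, H (x,y,z)) := by
    have := contParam (fun q : (ℝ×ℝ)×ℝ => H (q.1.2, q.1.1, q.2)) (by fun_prop) z0 z1
    exact this
  exact swap2 (fun y x => ∫ z in z0..z1, H (x,y,z)) hcont y0 y1 x0 x1 hy hx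

theorem stmt17 (x0 x1 y0 y1 z0 z1 : ℝ) (hx : x0 < x1) (hy : y0 < y1) (hz : z0 < z1)
    (ex ey ez : ℝ)
    (hex : ex = x1 - x0) (hey : ey = y1 - y0) (hez : ez = z1 - z0)
    -- `u` is three times continuously differentiable on a neighborhood `U` of `T`
    (u : ℝ → ℝ → ℝ → ℝ) (U : Set (ℝ × ℝ × ℝ)) (hU : IsOpen U)
    (hTU : Set.Icc x0 x1 ×ˢ Set.Icc y0 y1 ×ˢ Set.Icc z0 z1 ⊆ U)
    (hu : ContDiffOn ℝ 3 (fun p : ℝ × ℝ × ℝ => u p.1 p.2.1 p.2.2) U)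
    (Kx Kz : ℝ → ℝ)
    (hKx : ∀ x : ℝ, Kx x = ex ^ 2 * (x - x0) / 6 - ex * (x - x0) ^ 2 / 2 + (x - x0) ^ 3 / 3)
    (hKz : ∀ z : ℝ, Kz z = ez ^ 2 * (z - z0) / 6 - ez * (z - z0) ^ 2 / 2 + (z - z0) ^ 3 / 3)
    -- face averages of `u`
    (uF1 uF2 uF5 uF6 : ℝ)
    (huF1 : uF1 = (∫ y in y0..y1, ∫ z in z0..z1, u x0 y z) / (ey * ez))
    (huF2 : uF2 = (∫ y in y0..y1, ∫ z in z0..z1, u x1 y z) / (ey * ez))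
    (huF5 : uF5 = (∫ x in x0..x1, ∫ y in y0..y1, u x y z0) / (ex * ey))
    (huF6 : uF6 = (∫ x in x0..x1, ∫ y in y0..y1, u x y z1) / (ex * ey)) :
    ey * ez * (uF1 + uF2 - uF5 - uF6)
      = 1 / 6 * (ex * (∫ x in x0..x1, ∫ y in y0..y1, ∫ z in z0..z1,
            deriv^[2] (fun t => u t y z) x)
          - ez ^ 2 / ex * (∫ x in x0..x1, ∫ y in y0..y1, ∫ z in z0..z1,
            deriv^[2] (fun r => u x y r) z))
        + 1 / ex * (∫ x in x0..x1, ∫ y in y0..y1, ∫ z in z0..z1,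
            deriv^[3] (fun t => u t y z) x * Kx x)
        - 1 / ex * (∫ x in x0..x1, ∫ y in y0..y1, ∫ z in z0..z1,
            deriv^[3] (fun r => u x y r) z * Kz z) := by
  have hx' := hx.le
  have hy' := hy.le
  have hz' := hz.le
  set T : Set (ℝ×ℝ×ℝ) := Set.Icc x0 x1 ×ˢ Set.Icc y0 y1 ×ˢ Set.Icc z0 z1 with hT
  have hTc : IsClosed T := (isClosed_Icc.prod (isClosed_Icc.prod isClosed_Icc))
  set F : ℝ×ℝ×ℝ → ℝ := fun p => u p.1 p.2.1 p.2.2 with hF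
  set vx : ℝ×ℝ×ℝ := (1,0,0) with hvx
  set vz : ℝ×ℝ×ℝ := (0,0,1) with hvz
  -- smoothness of directional derivatives
  have hu3 : ContDiffOn ℝ (2+1:ℕ) F U := by exact_mod_cast hu
  have hA1cd : ContDiffOn ℝ (1+1:ℕ) (Dv vx F) U := by
    exact_mod_cast contDiffOn_Dv hU hu3
  have hA2cd : ContDiffOn ℝ (0+1:ℕ) (Dv vx (Dv vx F)) U := by
    exact_mod_cast contDiffOn_Dv hU hA1cd
  have hA2c : ContinuousOn (Dv vx (Dv vx F)) U := hA2cd.continuousOn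
  have hA3c : ContinuousOn (Dv vx (Dv vx (Dv vx F))) U := (contDiffOn_Dv hU hA2cd).continuousOn
  have hC1cd : ContDiffOn ℝ (1+1:ℕ) (Dv vz F) U := by
    exact_mod_cast contDiffOn_Dv hU hu3
  have hC2cd : ContDiffOn ℝ (0+1:ℕ) (Dv vz (Dv vz F)) U := by
    exact_mod_cast contDiffOn_Dv hU hC1cd
  have hC2c : ContinuousOn (Dv vz (Dv vz F)) U := hC2cd.continuousOn
  have hC3c : ContinuousOn (Dv vz (Dv vz (Dv vz F))) U := (contDiffOn_Dv hU hC2cd).continuousOn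
  -- global continuous extensions from the box
  obtain ⟨B0, hB0c, hB0e⟩ := extend_cont hTc F (hu.continuousOn.mono hTU)
  obtain ⟨B2, hB2c, hB2e⟩ := extend_cont hTc _ (hA2c.mono hTU)
  obtain ⟨B3, hB3c, hB3e⟩ := extend_cont hTc _ (hA3c.mono hTU)
  obtain ⟨D2, hD2c, hD2e⟩ := extend_cont hTc _ (hC2c.mono hTU)
  obtain ⟨D3, hD3c, hD3e⟩ := extend_cont hTc _ (hC3c.mono hTU)
  have hKxc : Continuous Kx := by
    rw [funext hKx]; fun_prop
  have hKzc : Continuous Kz := by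
    rw [funext hKz]; fun_prop
  have hmemT : ∀ {a b c : ℝ}, a ∈ Set.Icc x0 x1 → b ∈ Set.Icc y0 y1 → c ∈ Set.Icc z0 z1 →
      ((a,b,c) : ℝ×ℝ×ℝ) ∈ T := fun ha hb hc => ⟨ha, hb, hc⟩
  -- lines
  have hlx : ∀ (y z t : ℝ), HasDerivAt (fun t => ((t,y,z) : ℝ×ℝ×ℝ)) vx t := fun y z t =>
    (hasDerivAt_id t).prodMk ((hasDerivAt_const t y).prodMk (hasDerivAt_const t z))
  have hlz : ∀ (x y r : ℝ), HasDerivAt (fun r => ((x,y,r) : ℝ×ℝ×ℝ)) vz r := fun x y r =>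
    (hasDerivAt_const r x).prodMk ((hasDerivAt_const r y).prodMk (hasDerivAt_id r))
  -- pointwise slice-derivative identifications on the box
  have hd2x : ∀ {a b c : ℝ}, a ∈ Set.Icc x0 x1 → b ∈ Set.Icc y0 y1 → c ∈ Set.Icc z0 z1 →
      deriv^[2] (fun t => u t b c) a = B2 (a,b,c) := by
    intro a b c ha hb hc
    have hm : ((a,b,c) : ℝ×ℝ×ℝ) ∈ U := hTU (hmemT ha hb hc)
    rw [hB2e _ (hmemT ha hb hc)]
    exact deriv2_slice hU (hu.of_le (by norm_num)) (hlx b c) hm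
  have hd3x : ∀ {a b c : ℝ}, a ∈ Set.Icc x0 x1 → b ∈ Set.Icc y0 y1 → c ∈ Set.Icc z0 z1 →
      deriv^[3] (fun t => u t b c) a = B3 (a,b,c) := by
    intro a b c ha hb hc
    have hm : ((a,b,c) : ℝ×ℝ×ℝ) ∈ U := hTU (hmemT ha hb hc)
    rw [hB3e _ (hmemT ha hb hc)]
    exact deriv3_slice hU hu (hlx b c) hm
  have hd2z : ∀ {a b c : ℝ}, a ∈ Set.Icc x0 x1 → b ∈ Set.Icc y0 y1 → c ∈ Set.Icc z0 z1 →
      deriv^[2] (fun r => u a b r) c = D2 (a,b,c) := by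
    intro a b c ha hb hc
    have hm : ((a,b,c) : ℝ×ℝ×ℝ) ∈ U := hTU (hmemT ha hb hc)
    rw [hD2e _ (hmemT ha hb hc)]
    exact deriv2_slice hU (hu.of_le (by norm_num)) (hlz a b) hm
  have hd3z : ∀ {a b c : ℝ}, a ∈ Set.Icc x0 x1 → b ∈ Set.Icc y0 y1 → c ∈ Set.Icc z0 z1 →
      deriv^[3] (fun r => u a b r) c = D3 (a,b,c) := by
    intro a b c ha hb hc
    have hm : ((a,b,c) : ℝ×ℝ×ℝ) ∈ U := hTU (hmemT ha hb hc)
    rw [hD3e _ (hmemT ha hb hc)]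
    exact deriv3_slice hU hu (hlz a b) hm
  -- pointwise 1D identities
  have keyX : ∀ b ∈ Set.Icc y0 y1, ∀ c ∈ Set.Icc z0 z1,
      ex*(B0 (x0,b,c) + B0 (x1,b,c)) = 2*(∫ x in x0..x1, B0 (x,b,c))
        + ex^2/6*(∫ x in x0..x1, B2 (x,b,c)) + ∫ x in x0..x1, B3 (x,b,c) * Kx x := by
    intro b hb c hc
    have hVo : IsOpen {t : ℝ | ((t,b,c) : ℝ×ℝ×ℝ) ∈ U} := hU.preimage (by fun_prop)
    have hIV : Set.Icc x0 x1 ⊆ {t : ℝ | ((t,b,c) : ℝ×ℝ×ℝ) ∈ U} :=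
      fun t ht => hTU (hmemT ht hb hc)
    have hfC : ContDiffOn ℝ 3 (fun t => u t b c) {t : ℝ | ((t,b,c) : ℝ×ℝ×ℝ) ∈ U} := by
      have hline : ContDiff ℝ 3 (fun t : ℝ => ((t,b,c) : ℝ×ℝ×ℝ)) := by fun_prop
      exact hu.comp hline.contDiffOn (fun t ht => ht)
    have h1 := oneD_s17 x0 x1 hx _ hVo hIV _ hfC Kx (fun x => by rw [hKx x, hex])
    rw [← hex] at h1
    have e0 : (∫ x in x0..x1, u x b c) = ∫ x in x0..x1, B0 (x,b,c) :=
      intervalIntegral.integral_congr fun t ht => by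
        rw [Set.uIcc_of_le hx'] at ht
        exact (hB0e _ (hmemT ht hb hc)).symm
    have e2 : (∫ x in x0..x1, deriv^[2] (fun t => u t b c) x)
        = ∫ x in x0..x1, B2 (x,b,c) :=
      intervalIntegral.integral_congr fun t ht => by
        rw [Set.uIcc_of_le hx'] at ht
        exact hd2x ht hb hc
    have e3 : (∫ x in x0..x1, deriv^[3] (fun t => u t b c) x * Kx x)
        = ∫ x in x0..x1, B3 (x,b,c) * Kx x :=
      intervalIntegral.integral_congr fun t ht => by
        rw [Set.uIcc_of_le hx'] at ht
        rw [hd3x ht hb hc]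
    rw [e0, e2, e3] at h1
    rw [show u x0 b c = B0 (x0,b,c) from (hB0e _ (hmemT (Set.left_mem_Icc.2 hx') hb hc)).symm,
        show u x1 b c = B0 (x1,b,c) from (hB0e _ (hmemT (Set.right_mem_Icc.2 hx') hb hc)).symm] at h1
    linarith [h1]
  have keyZ : ∀ a ∈ Set.Icc x0 x1, ∀ b ∈ Set.Icc y0 y1,
      ez*(B0 (a,b,z0) + B0 (a,b,z1)) = 2*(∫ z in z0..z1, B0 (a,b,z))
        + ez^2/6*(∫ z in z0..z1, D2 (a,b,z)) + ∫ z in z0..z1, D3 (a,b,z) * Kz z := by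
    intro a ha b hb
    have hVo : IsOpen {r : ℝ | ((a,b,r) : ℝ×ℝ×ℝ) ∈ U} := hU.preimage (by fun_prop)
    have hIV : Set.Icc z0 z1 ⊆ {r : ℝ | ((a,b,r) : ℝ×ℝ×ℝ) ∈ U} :=
      fun r hr => hTU (hmemT ha hb hr)
    have hfC : ContDiffOn ℝ 3 (fun r => u a b r) {r : ℝ | ((a,b,r) : ℝ×ℝ×ℝ) ∈ U} := by
      have hline : ContDiff ℝ 3 (fun r : ℝ => ((a,b,r) : ℝ×ℝ×ℝ)) := by fun_prop
      exact hu.comp hline.contDiffOn (fun r hr => hr)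
    have h1 := oneD_s17 z0 z1 hz _ hVo hIV _ hfC Kz (fun z => by rw [hKz z, hez])
    rw [← hez] at h1
    have e0 : (∫ r in z0..z1, u a b r) = ∫ r in z0..z1, B0 (a,b,r) :=
      intervalIntegral.integral_congr fun r hr => by
        rw [Set.uIcc_of_le hz'] at hr
        exact (hB0e _ (hmemT ha hb hr)).symm
    have e2 : (∫ r in z0..z1, deriv^[2] (fun r => u a b r) r)
        = ∫ r in z0..z1, D2 (a,b,r) :=
      intervalIntegral.integral_congr fun r hr => by
        rw [Set.uIcc_of_le hz'] at hr
        exact hd2z ha hb hr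
    have e3 : (∫ r in z0..z1, deriv^[3] (fun r => u a b r) r * Kz r)
        = ∫ r in z0..z1, D3 (a,b,r) * Kz r :=
      intervalIntegral.integral_congr fun r hr => by
        rw [Set.uIcc_of_le hz'] at hr
        rw [hd3z ha hb hr]
    rw [e0, e2, e3] at h1
    rw [show u a b z0 = B0 (a,b,z0) from (hB0e _ (hmemT ha hb (Set.left_mem_Icc.2 hz'))).symm,
        show u a b z1 = B0 (a,b,z1) from (hB0e _ (hmemT ha hb (Set.right_mem_Icc.2 hz'))).symm] at h1
    linarith [h1]
  -- integrate keyX over z, then y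
  have keyX2 : ∀ b ∈ Set.Icc y0 y1,
      ex*((∫ c in z0..z1, B0 (x0,b,c)) + ∫ c in z0..z1, B0 (x1,b,c))
        = 2*(∫ c in z0..z1, ∫ x in x0..x1, B0 (x,b,c))
          + ex^2/6*(∫ c in z0..z1, ∫ x in x0..x1, B2 (x,b,c))
          + ∫ c in z0..z1, ∫ x in x0..x1, B3 (x,b,c) * Kx x := by
    intro b hb
    have hcongr : (∫ c in z0..z1, ex*(B0 (x0,b,c) + B0 (x1,b,c)))
        = ∫ c in z0..z1, (2*(∫ x in x0..x1, B0 (x,b,c))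
            + ex^2/6*(∫ x in x0..x1, B2 (x,b,c)) + ∫ x in x0..x1, B3 (x,b,c) * Kx x) :=
      intervalIntegral.integral_congr fun c hc => by
        rw [Set.uIcc_of_le hz'] at hc
        exact keyX b hb c hc
    have l1 : Continuous fun c => B0 (x0,b,c) := by fun_prop
    have l2 : Continuous fun c => B0 (x1,b,c) := by fun_prop
    have cP : Continuous fun c : ℝ => ∫ x in x0..x1, B0 (x,b,c) :=
      contParam (fun q : ℝ×ℝ => B0 (q.2,b,q.1)) (by fun_prop) x0 x1
    have cQ : Continuous fun c : ℝ => ∫ x in x0..x1, B2 (x,b,c) :=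
      contParam (fun q : ℝ×ℝ => B2 (q.2,b,q.1)) (by fun_prop) x0 x1
    have cR : Continuous fun c : ℝ => ∫ x in x0..x1, B3 (x,b,c) * Kx x :=
      contParam (fun q : ℝ×ℝ => B3 (q.2,b,q.1) * Kx q.2) (by fun_prop) x0 x1
    have i1 : IntervalIntegrable (fun c => 2*(∫ x in x0..x1, B0 (x,b,c))) volume z0 z1 :=
      (continuous_const.mul cP).intervalIntegrable z0 z1
    have i2 : IntervalIntegrable (fun c => ex^2/6*(∫ x in x0..x1, B2 (x,b,c))) volume z0 z1 :=
      (continuous_const.mul cQ).intervalIntegrable z0 z1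
    have i3 : IntervalIntegrable (fun c => ∫ x in x0..x1, B3 (x,b,c) * Kx x) volume z0 z1 :=
      cR.intervalIntegrable z0 z1
    rw [intervalIntegral.integral_const_mul,
        intervalIntegral.integral_add (l1.intervalIntegrable z0 z1) (l2.intervalIntegrable z0 z1),
        intervalIntegral.integral_add (i1.add i2) i3,
        intervalIntegral.integral_add i1 i2,
        intervalIntegral.integral_const_mul, intervalIntegral.integral_const_mul] at hcongr
    exact hcongr
  have cPP : Continuous fun b : ℝ => ∫ c in z0..z1, ∫ x in x0..x1, B0 (x,b,c) :=
    contParam (fun q : ℝ×ℝ => ∫ x in x0..x1, B0 (x,q.1,q.2))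
      (contParam (fun w : (ℝ×ℝ)×ℝ => B0 (w.2, w.1.1, w.1.2)) (by fun_prop) x0 x1) z0 z1
  have cQQ : Continuous fun b : ℝ => ∫ c in z0..z1, ∫ x in x0..x1, B2 (x,b,c) :=
    contParam (fun q : ℝ×ℝ => ∫ x in x0..x1, B2 (x,q.1,q.2))
      (contParam (fun w : (ℝ×ℝ)×ℝ => B2 (w.2, w.1.1, w.1.2)) (by fun_prop) x0 x1) z0 z1
  have cRR : Continuous fun b : ℝ => ∫ c in z0..z1, ∫ x in x0..x1, B3 (x,b,c) * Kx x :=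
    contParam (fun q : ℝ×ℝ => ∫ x in x0..x1, B3 (x,q.1,q.2) * Kx x)
      (contParam (fun w : (ℝ×ℝ)×ℝ => B3 (w.2, w.1.1, w.1.2) * Kx w.2) (by fun_prop) x0 x1) z0 z1
  have keyX3 :
      ex*((∫ b in y0..y1, ∫ c in z0..z1, B0 (x0,b,c))
          + ∫ b in y0..y1, ∫ c in z0..z1, B0 (x1,b,c))
        = 2*(∫ b in y0..y1, ∫ c in z0..z1, ∫ x in x0..x1, B0 (x,b,c))
          + ex^2/6*(∫ b in y0..y1, ∫ c in z0..z1, ∫ x in x0..x1, B2 (x,b,c))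
          + ∫ b in y0..y1, ∫ c in z0..z1, ∫ x in x0..x1, B3 (x,b,c) * Kx x := by
    have hcongr : (∫ b in y0..y1, ex*((∫ c in z0..z1, B0 (x0,b,c)) + ∫ c in z0..z1, B0 (x1,b,c)))
        = ∫ b in y0..y1, (2*(∫ c in z0..z1, ∫ x in x0..x1, B0 (x,b,c))
            + ex^2/6*(∫ c in z0..z1, ∫ x in x0..x1, B2 (x,b,c))
            + ∫ c in z0..z1, ∫ x in x0..x1, B3 (x,b,c) * Kx x) :=
      intervalIntegral.integral_congr fun b hb => by
        rw [Set.uIcc_of_le hy'] at hb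
        exact keyX2 b hb
    have l1 : Continuous fun b : ℝ => ∫ c in z0..z1, B0 (x0,b,c) :=
      contParam (fun q : ℝ×ℝ => B0 (x0,q.1,q.2)) (by fun_prop) z0 z1
    have l2 : Continuous fun b : ℝ => ∫ c in z0..z1, B0 (x1,b,c) :=
      contParam (fun q : ℝ×ℝ => B0 (x1,q.1,q.2)) (by fun_prop) z0 z1
    have i1 : IntervalIntegrable
        (fun b => 2*(∫ c in z0..z1, ∫ x in x0..x1, B0 (x,b,c))) volume y0 y1 :=
      (continuous_const.mul cPP).intervalIntegrable y0 y1
    have i2 : IntervalIntegrable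
        (fun b => ex^2/6*(∫ c in z0..z1, ∫ x in x0..x1, B2 (x,b,c))) volume y0 y1 :=
      (continuous_const.mul cQQ).intervalIntegrable y0 y1
    have i3 : IntervalIntegrable
        (fun b => ∫ c in z0..z1, ∫ x in x0..x1, B3 (x,b,c) * Kx x) volume y0 y1 :=
      cRR.intervalIntegrable y0 y1
    rw [intervalIntegral.integral_const_mul,
        intervalIntegral.integral_add (l1.intervalIntegrable y0 y1) (l2.intervalIntegrable y0 y1),
        intervalIntegral.integral_add (i1.add i2) i3,
        intervalIntegral.integral_add i1 i2,
        intervalIntegral.integral_const_mul, intervalIntegral.integral_const_mul] at hcongr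
    exact hcongr
  -- integrate keyZ over y, then x
  have keyZ2 : ∀ a ∈ Set.Icc x0 x1,
      ez*((∫ b in y0..y1, B0 (a,b,z0)) + ∫ b in y0..y1, B0 (a,b,z1))
        = 2*(∫ b in y0..y1, ∫ c in z0..z1, B0 (a,b,c))
          + ez^2/6*(∫ b in y0..y1, ∫ c in z0..z1, D2 (a,b,c))
          + ∫ b in y0..y1, ∫ c in z0..z1, D3 (a,b,c) * Kz c := by
    intro a ha
    have hcongr : (∫ b in y0..y1, ez*(B0 (a,b,z0) + B0 (a,b,z1)))
        = ∫ b in y0..y1, (2*(∫ c in z0..z1, B0 (a,b,c))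
            + ez^2/6*(∫ c in z0..z1, D2 (a,b,c)) + ∫ c in z0..z1, D3 (a,b,c) * Kz c) :=
      intervalIntegral.integral_congr fun b hb => by
        rw [Set.uIcc_of_le hy'] at hb
        exact keyZ a ha b hb
    have l1 : Continuous fun b => B0 (a,b,z0) := by fun_prop
    have l2 : Continuous fun b => B0 (a,b,z1) := by fun_prop
    have cP : Continuous fun b : ℝ => ∫ c in z0..z1, B0 (a,b,c) :=
      contParam (fun q : ℝ×ℝ => B0 (a,q.1,q.2)) (by fun_prop) z0 z1
    have cQ : Continuous fun b : ℝ => ∫ c in z0..z1, D2 (a,b,c) :=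
      contParam (fun q : ℝ×ℝ => D2 (a,q.1,q.2)) (by fun_prop) z0 z1
    have cR : Continuous fun b : ℝ => ∫ c in z0..z1, D3 (a,b,c) * Kz c :=
      contParam (fun q : ℝ×ℝ => D3 (a,q.1,q.2) * Kz q.2) (by fun_prop) z0 z1
    have i1 : IntervalIntegrable (fun b => 2*(∫ c in z0..z1, B0 (a,b,c))) volume y0 y1 :=
      (continuous_const.mul cP).intervalIntegrable y0 y1
    have i2 : IntervalIntegrable (fun b => ez^2/6*(∫ c in z0..z1, D2 (a,b,c))) volume y0 y1 :=
      (continuous_const.mul cQ).intervalIntegrable y0 y1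
    have i3 : IntervalIntegrable (fun b => ∫ c in z0..z1, D3 (a,b,c) * Kz c) volume y0 y1 :=
      cR.intervalIntegrable y0 y1
    rw [intervalIntegral.integral_const_mul,
        intervalIntegral.integral_add (l1.intervalIntegrable y0 y1) (l2.intervalIntegrable y0 y1),
        intervalIntegral.integral_add (i1.add i2) i3,
        intervalIntegral.integral_add i1 i2,
        intervalIntegral.integral_const_mul, intervalIntegral.integral_const_mul] at hcongr
    exact hcongr
  have cPP' : Continuous fun a : ℝ => ∫ b in y0..y1, ∫ c in z0..z1, B0 (a,b,c) :=
    contParam (fun q : ℝ×ℝ => ∫ c in z0..z1, B0 (q.1,q.2,c))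
      (contParam (fun w : (ℝ×ℝ)×ℝ => B0 (w.1.1, w.1.2, w.2)) (by fun_prop) z0 z1) y0 y1
  have cQQ' : Continuous fun a : ℝ => ∫ b in y0..y1, ∫ c in z0..z1, D2 (a,b,c) :=
    contParam (fun q : ℝ×ℝ => ∫ c in z0..z1, D2 (q.1,q.2,c))
      (contParam (fun w : (ℝ×ℝ)×ℝ => D2 (w.1.1, w.1.2, w.2)) (by fun_prop) z0 z1) y0 y1
  have cRR' : Continuous fun a : ℝ => ∫ b in y0..y1, ∫ c in z0..z1, D3 (a,b,c) * Kz c :=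
    contParam (fun q : ℝ×ℝ => ∫ c in z0..z1, D3 (q.1,q.2,c) * Kz c)
      (contParam (fun w : (ℝ×ℝ)×ℝ => D3 (w.1.1, w.1.2, w.2) * Kz w.2) (by fun_prop) z0 z1) y0 y1
  have keyZ3 :
      ez*((∫ a in x0..x1, ∫ b in y0..y1, B0 (a,b,z0))
          + ∫ a in x0..x1, ∫ b in y0..y1, B0 (a,b,z1))
        = 2*(∫ a in x0..x1, ∫ b in y0..y1, ∫ c in z0..z1, B0 (a,b,c))
          + ez^2/6*(∫ a in x0..x1, ∫ b in y0..y1, ∫ c in z0..z1, D2 (a,b,c))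
          + ∫ a in x0..x1, ∫ b in y0..y1, ∫ c in z0..z1, D3 (a,b,c) * Kz c := by
    have hcongr : (∫ a in x0..x1, ez*((∫ b in y0..y1, B0 (a,b,z0)) + ∫ b in y0..y1, B0 (a,b,z1)))
        = ∫ a in x0..x1, (2*(∫ b in y0..y1, ∫ c in z0..z1, B0 (a,b,c))
            + ez^2/6*(∫ b in y0..y1, ∫ c in z0..z1, D2 (a,b,c))
            + ∫ b in y0..y1, ∫ c in z0..z1, D3 (a,b,c) * Kz c) :=
      intervalIntegral.integral_congr fun a ha => by
        rw [Set.uIcc_of_le hx'] at ha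
        exact keyZ2 a ha
    have l1 : Continuous fun a : ℝ => ∫ b in y0..y1, B0 (a,b,z0) :=
      contParam (fun q : ℝ×ℝ => B0 (q.1,q.2,z0)) (by fun_prop) y0 y1
    have l2 : Continuous fun a : ℝ => ∫ b in y0..y1, B0 (a,b,z1) :=
      contParam (fun q : ℝ×ℝ => B0 (q.1,q.2,z1)) (by fun_prop) y0 y1
    have i1 : IntervalIntegrable
        (fun a => 2*(∫ b in y0..y1, ∫ c in z0..z1, B0 (a,b,c))) volume x0 x1 :=
      (continuous_const.mul cPP').intervalIntegrable x0 x1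
    have i2 : IntervalIntegrable
        (fun a => ez^2/6*(∫ b in y0..y1, ∫ c in z0..z1, D2 (a,b,c))) volume x0 x1 :=
      (continuous_const.mul cQQ').intervalIntegrable x0 x1
    have i3 : IntervalIntegrable
        (fun a => ∫ b in y0..y1, ∫ c in z0..z1, D3 (a,b,c) * Kz c) volume x0 x1 :=
      cRR'.intervalIntegrable x0 x1
    rw [intervalIntegral.integral_const_mul,
        intervalIntegral.integral_add (l1.intervalIntegrable x0 x1) (l2.intervalIntegrable x0 x1),
        intervalIntegral.integral_add (i1.add i2) i3,
        intervalIntegral.integral_add i1 i2,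
        intervalIntegral.integral_const_mul, intervalIntegral.integral_const_mul] at hcongr
    exact hcongr
  -- reorder the x-direction triple integrals
  have sw0 : (∫ b in y0..y1, ∫ c in z0..z1, ∫ x in x0..x1, B0 (x,b,c))
      = ∫ x in x0..x1, ∫ b in y0..y1, ∫ c in z0..z1, B0 (x,b,c) :=
    swap3 B0 hB0c x0 x1 y0 y1 z0 z1 hx' hy' hz'
  have sw2 : (∫ b in y0..y1, ∫ c in z0..z1, ∫ x in x0..x1, B2 (x,b,c))
      = ∫ x in x0..x1, ∫ b in y0..y1, ∫ c in z0..z1, B2 (x,b,c) :=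
    swap3 B2 hB2c x0 x1 y0 y1 z0 z1 hx' hy' hz'
  have sw3 : (∫ b in y0..y1, ∫ c in z0..z1, ∫ x in x0..x1, B3 (x,b,c) * Kx x)
      = ∫ x in x0..x1, ∫ b in y0..y1, ∫ c in z0..z1, B3 (x,b,c) * Kx x :=
    swap3 (fun p => B3 p * Kx p.1) (by fun_prop) x0 x1 y0 y1 z0 z1 hx' hy' hz'
  rw [sw0, sw2, sw3] at keyX3
  -- rewrite the goal in terms of the extended functions
  rw [huF1, huF2, huF5, huF6]
  have g1 : (∫ y in y0..y1, ∫ z in z0..z1, u x0 y z)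
      = ∫ b in y0..y1, ∫ c in z0..z1, B0 (x0,b,c) :=
    dblInt_congr hy' hz' fun b hb c hc =>
      (hB0e _ (hmemT (Set.left_mem_Icc.2 hx') hb hc)).symm
  have g2 : (∫ y in y0..y1, ∫ z in z0..z1, u x1 y z)
      = ∫ b in y0..y1, ∫ c in z0..z1, B0 (x1,b,c) :=
    dblInt_congr hy' hz' fun b hb c hc =>
      (hB0e _ (hmemT (Set.right_mem_Icc.2 hx') hb hc)).symm
  have g5 : (∫ x in x0..x1, ∫ y in y0..y1, u x y z0)
      = ∫ a in x0..x1, ∫ b in y0..y1, B0 (a,b,z0) :=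
    dblInt_congr hx' hy' fun a ha b hb =>
      (hB0e _ (hmemT ha hb (Set.left_mem_Icc.2 hz'))).symm
  have g6 : (∫ x in x0..x1, ∫ y in y0..y1, u x y z1)
      = ∫ a in x0..x1, ∫ b in y0..y1, B0 (a,b,z1) :=
    dblInt_congr hx' hy' fun a ha b hb =>
      (hB0e _ (hmemT ha hb (Set.right_mem_Icc.2 hz'))).symm
  have G2x : (∫ x in x0..x1, ∫ y in y0..y1, ∫ z in z0..z1, deriv^[2] (fun t => u t y z) x)
      = ∫ x in x0..x1, ∫ b in y0..y1, ∫ c in z0..z1, B2 (x,b,c) :=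
    tripInt_congr hx' hy' hz' fun a ha b hb c hc => hd2x ha hb hc
  have G3x : (∫ x in x0..x1, ∫ y in y0..y1, ∫ z in z0..z1,
        deriv^[3] (fun t => u t y z) x * Kx x)
      = ∫ x in x0..x1, ∫ b in y0..y1, ∫ c in z0..z1, B3 (x,b,c) * Kx x :=
    tripInt_congr hx' hy' hz' fun a ha b hb c hc => by rw [hd3x ha hb hc]
  have G2z : (∫ x in x0..x1, ∫ y in y0..y1, ∫ z in z0..z1, deriv^[2] (fun r => u x y r) z)
      = ∫ a in x0..x1, ∫ b in y0..y1, ∫ c in z0..z1, D2 (a,b,c) :=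
    tripInt_congr hx' hy' hz' fun a ha b hb c hc => hd2z ha hb hc
  have G3z : (∫ x in x0..x1, ∫ y in y0..y1, ∫ z in z0..z1,
        deriv^[3] (fun r => u x y r) z * Kz z)
      = ∫ a in x0..x1, ∫ b in y0..y1, ∫ c in z0..z1, D3 (a,b,c) * Kz c :=
    tripInt_congr hx' hy' hz' fun a ha b hb c hc => by rw [hd3z ha hb hc]
  rw [g1, g2, g5, g6, G2x, G3x, G2z, G3z]
  -- final arithmetic
  set P1 := ∫ b in y0..y1, ∫ c in z0..z1, B0 (x0,b,c) with hP1
  set P2 := ∫ b in y0..y1, ∫ c in z0..z1, B0 (x1,b,c) with hP2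
  set Q1 := ∫ a in x0..x1, ∫ b in y0..y1, B0 (a,b,z0) with hQ1
  set Q2 := ∫ a in x0..x1, ∫ b in y0..y1, B0 (a,b,z1) with hQ2
  set S0 := ∫ x in x0..x1, ∫ b in y0..y1, ∫ c in z0..z1, B0 (x,b,c) with hS0
  set S2x := ∫ x in x0..x1, ∫ b in y0..y1, ∫ c in z0..z1, B2 (x,b,c) with hS2x
  set S3x := ∫ x in x0..x1, ∫ b in y0..y1, ∫ c in z0..z1, B3 (x,b,c) * Kx x with hS3x
  set S2z := ∫ a in x0..x1, ∫ b in y0..y1, ∫ c in z0..z1, D2 (a,b,c) with hS2z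
  set S3z := ∫ a in x0..x1, ∫ b in y0..y1, ∫ c in z0..z1, D3 (a,b,c) * Kz c with hS3z
  have hex0 : ex ≠ 0 := by rw [hex]; linarith
  have hey0 : ey ≠ 0 := by rw [hey]; linarith
  have hez0 : ez ≠ 0 := by rw [hez]; linarith
  apply mul_left_cancel₀ hex0
  have L : ex * (ey * ez * (P1/(ey*ez) + P2/(ey*ez) - Q1/(ex*ey) - Q2/(ex*ey)))
      = ex*(P1+P2) - ez*(Q1+Q2) := by
    field_simp
    ring
  have R : ex * (1/6*(ex*S2x - ez^2/ex*S2z) + 1/ex*S3x - 1/ex*S3z)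
      = ex^2/6*S2x - ez^2/6*S2z + S3x - S3z := by
    field_simp
  rw [L, R]
  linear_combination keyX3 - keyZ3
end
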